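/- Let G be a locally compact Abelian group, V a relatively compact open neighborhood of 0 with Haar measure μ(V) > 0, and r := (1/μ(V)) 𝟙_V ⋆ 𝟙_{−V}. Then for every x ∈ G the function r_x := 2r − r(· − x) − r(· + x) is positive definite. -/

import Mathlib

open MeasureTheory Pointwise

/-- `f : G → ℝ` is positive definite with complex coefficients. -/
def IsPosDefFn {G : Type*} [AddCommGroup G] (f : G → ℝ) : Prop :=
  ∀ (n : ℕ) (x : Fin n → G) (c : Fin n → ℂ),
    0 ≤ (∑ j, ∑ k, c j * (starRingEnd ℂ) (c k) * (f (x j - x k) : ℂ)).re ∧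
      (∑ j, ∑ k, c j * (starRingEnd ℂ) (c k) * (f (x j - x k) : ℂ)).im = 0

/-- For the generalized triangle function `r = (1/μ(V)) 𝟙_V ⋆ 𝟙_{−V}` and any `x ∈ G`,
the function `r_x := 2r − r(· − x) − r(· + x)` is positive definite. -/
theorem triangle_difference_posdef {G : Type*} [AddCommGroup G] [TopologicalSpace G]
    [IsTopologicalAddGroup G] [LocallyCompactSpace G] [T2Space G]
    [MeasurableSpace G] [BorelSpace G]
    (μ : Measure G) [μ.IsAddHaarMeasure]
    (V : Set G) (hVo : IsOpen V) (hVc : IsCompact (closure V)) (h0V : (0 : G) ∈ V)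
    (hVpos : 0 < μ V) :
    let r : G → ℝ := fun y => (μ V).toReal⁻¹ *
      ∫ t, V.indicator (fun _ => (1 : ℝ)) t * (-V).indicator (fun _ => (1 : ℝ)) (y - t) ∂μ
    ∀ x : G, IsPosDefFn (fun y => 2 * r y - r (y - x) - r (y + x)) := by
  intro r x n xs c
  classical
  set ind : G → ℝ := V.indicator (fun _ => (1 : ℝ)) with hind_def
  have hVfin : μ V < ⊤ := lt_of_le_of_lt (measure_mono subset_closure) hVc.measure_lt_top
  have hind : Integrable ind μ := by
    rw [hind_def, integrable_indicator_iff hVo.measurableSet]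
    exact integrableOn_const hVfin.ne
  have hbdd : ∀ t : G, ‖ind t‖ ≤ 1 := by
    intro t
    rw [hind_def, Set.indicator_apply]
    by_cases h : t ∈ V <;> simp [h]
  have hinds : ∀ a : G, Integrable (fun t => ind (t - a)) μ := fun a => hind.comp_sub_right a
  have hprod : ∀ a b : G, Integrable (fun t => ind (t - a) * ind (t - b)) μ := fun a b =>
    (hinds b).bdd_mul (hinds a).aestronglyMeasurable (Filter.Eventually.of_forall fun t => hbdd _)
  set J : G → G → ℝ := fun a b => ∫ t, ind (t - a) * ind (t - b) ∂μ with hJ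
  -- translation invariance of J
  have hJsub : ∀ a b : G, J a b = J 0 (b - a) := by
    intro a b
    have h1 : ∫ t, ind (t + a - a) * ind (t + a - b) ∂μ = ∫ t, ind (t - a) * ind (t - b) ∂μ :=
      integral_add_right_eq_self (fun t => ind (t - a) * ind (t - b)) a
    simp only [hJ]
    rw [← h1]
    refine integral_congr_ae (Filter.Eventually.of_forall fun t => ?_)
    show ind (t + a - a) * ind (t + a - b) = ind (t - 0) * ind (t - (b - a))
    have e1 : t + a - a = t - 0 := by abel
    have e2 : t + a - b = t - (b - a) := by abel
    rw [e1, e2]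
  have hJswap : ∀ a b : G, J a b = J b a := by
    intro a b
    simp only [hJ]
    exact integral_congr_ae (Filter.Eventually.of_forall fun t => mul_comm _ _)
  have hJd : ∀ a b : G, J a b = J 0 (a - b) := fun a b => by rw [hJswap, hJsub b a]
  -- r in terms of J
  have hr : ∀ y : G, r y = (μ V).toReal⁻¹ * J 0 y := by
    intro y
    have hbody : r y = (μ V).toReal⁻¹ *
        ∫ t, ind t * (-V).indicator (fun _ => (1 : ℝ)) (y - t) ∂μ := rfl
    rw [hbody]
    simp only [hJ]
    congr 1
    refine integral_congr_ae (Filter.Eventually.of_forall fun t => ?_)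
    show ind t * (-V).indicator (fun _ => (1 : ℝ)) (y - t) = ind (t - 0) * ind (t - y)
    rw [sub_zero]
    congr 1
    have hmem : y - t ∈ -V ↔ t - y ∈ V := by rw [Set.mem_neg, neg_sub]
    rw [hind_def]
    simp [Set.indicator_apply, hmem]
  -- expansion of the quadratic integrand
  set g : Fin n → G → ℝ := fun j t => ind (t - xs j) - ind (t - (x + xs j)) with hg
  have hgint : ∀ j : Fin n, Integrable (g j) μ := fun j => (hinds _).sub (hinds _)
  have hgbdd : ∀ (j : Fin n) (t : G), ‖g j t‖ ≤ 2 := by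
    intro j t
    simp only [hg]
    calc ‖ind (t - xs j) - ind (t - (x + xs j))‖
        ≤ ‖ind (t - xs j)‖ + ‖ind (t - (x + xs j))‖ := norm_sub_le _ _
      _ ≤ 1 + 1 := add_le_add (hbdd _) (hbdd _)
      _ = 2 := by norm_num
  have hgg : ∀ j k : Fin n, Integrable (fun t => g j t * g k t) μ := fun j k =>
    (hgint k).bdd_mul (hgint j).aestronglyMeasurable (Filter.Eventually.of_forall fun t => hgbdd j t)
  have hexp : ∀ j k : Fin n,
      ∫ t, g j t * g k t ∂μ =
        J (xs j) (xs k) - J (xs j) (x + xs k) - J (x + xs j) (xs k)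
          + J (x + xs j) (x + xs k) := by
    intro j k
    have e : (fun t => g j t * g k t) = fun t =>
        ind (t - xs j) * ind (t - xs k) - ind (t - xs j) * ind (t - (x + xs k))
          - ind (t - (x + xs j)) * ind (t - xs k)
          + ind (t - (x + xs j)) * ind (t - (x + xs k)) := by
      funext t
      simp only [hg]
      ring
    have i1 : Integrable (fun t => ind (t - xs j) * ind (t - xs k)
        - ind (t - xs j) * ind (t - (x + xs k))) μ := (hprod _ _).sub (hprod _ _)
    have i2 : Integrable (fun t => ind (t - xs j) * ind (t - xs k)
        - ind (t - xs j) * ind (t - (x + xs k))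
        - ind (t - (x + xs j)) * ind (t - xs k)) μ := i1.sub (hprod _ _)
    rw [e, integral_add i2 (hprod _ _), integral_sub i1 (hprod _ _),
      integral_sub (hprod _ _) (hprod _ _)]
  -- the key pointwise identity
  have key : ∀ j k : Fin n,
      2 * r (xs j - xs k) - r (xs j - xs k - x) - r (xs j - xs k + x)
        = (μ V).toReal⁻¹ * ∫ t, g j t * g k t ∂μ := by
    intro j k
    rw [hexp j k, hr, hr, hr, hJd (xs j) (xs k), hJd (xs j) (x + xs k),
      hJd (x + xs j) (xs k), hJd (x + xs j) (x + xs k)]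
    have e1 : xs j - (x + xs k) = xs j - xs k - x := by abel
    have e2 : x + xs j - xs k = xs j - xs k + x := by abel
    have e3 : x + xs j - (x + xs k) = xs j - xs k := by abel
    rw [e1, e2, e3]
    ring
  -- the complex quadratic form
  set Φ : G → ℂ := fun t => ∑ j, c j * (g j t : ℂ) with hΦ
  have hterm : ∀ j k : Fin n, (fun t => (c j * (g j t : ℂ)) *
      (starRingEnd ℂ) (c k * (g k t : ℂ)))
      = fun t => (c j * (starRingEnd ℂ) (c k)) * ((g j t * g k t : ℝ) : ℂ) := by
    intro j k
    funext t
    simp only [map_mul, Complex.conj_ofReal]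
    push_cast
    ring
  have hterm_int : ∀ j k : Fin n, Integrable
      (fun t => (c j * (g j t : ℂ)) * (starRingEnd ℂ) (c k * (g k t : ℂ))) μ := by
    intro j k
    rw [hterm j k]
    exact ((hgg j k).ofReal).const_mul _
  have hint_eq : ∫ t, Φ t * (starRingEnd ℂ) (Φ t) ∂μ
      = ∑ j, ∑ k, (c j * (starRingEnd ℂ) (c k)) * ((∫ t, g j t * g k t ∂μ : ℝ) : ℂ) := by
    have e : ∀ t : G, Φ t * (starRingEnd ℂ) (Φ t)
        = ∑ j, ∑ k, (c j * (g j t : ℂ)) * (starRingEnd ℂ) (c k * (g k t : ℂ)) := by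
      intro t
      simp only [hΦ, map_sum, Finset.sum_mul_sum]
    rw [integral_congr_ae (Filter.Eventually.of_forall e)]
    rw [integral_finset_sum _ (fun j _ => integrable_finset_sum _ (fun k _ => hterm_int j k))]
    refine Finset.sum_congr rfl fun j _ => ?_
    rw [integral_finset_sum _ (fun k _ => hterm_int j k)]
    refine Finset.sum_congr rfl fun k _ => ?_
    rw [hterm j k, integral_const_mul]
    congr 1
    exact integral_ofReal
  -- putting it together
  have main : (∑ j, ∑ k, c j * (starRingEnd ℂ) (c k) *
        ((2 * r (xs j - xs k) - r (xs j - xs k - x) - r (xs j - xs k + x) : ℝ) : ℂ))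
      = (((μ V).toReal⁻¹ * ∫ t, Complex.normSq (Φ t) ∂μ : ℝ) : ℂ) := by
    have step1 : (∑ j, ∑ k, c j * (starRingEnd ℂ) (c k) *
          ((2 * r (xs j - xs k) - r (xs j - xs k - x) - r (xs j - xs k + x) : ℝ) : ℂ))
        = (((μ V).toReal⁻¹ : ℝ) : ℂ) *
          ∑ j, ∑ k, (c j * (starRingEnd ℂ) (c k)) * ((∫ t, g j t * g k t ∂μ : ℝ) : ℂ) := by
      rw [Finset.mul_sum]
      refine Finset.sum_congr rfl fun j _ => ?_
      rw [Finset.mul_sum]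
      refine Finset.sum_congr rfl fun k _ => ?_
      rw [key j k]
      push_cast
      ring
    have step2 : ∫ t, Φ t * (starRingEnd ℂ) (Φ t) ∂μ
        = ((∫ t, Complex.normSq (Φ t) ∂μ : ℝ) : ℂ) := by
      have e2 : ∫ t, Φ t * (starRingEnd ℂ) (Φ t) ∂μ
          = ∫ t, ((Complex.normSq (Φ t) : ℝ) : ℂ) ∂μ :=
        integral_congr_ae (Filter.Eventually.of_forall fun t => Complex.mul_conj (Φ t))
      rw [e2]
      exact integral_ofReal
    rw [step1, ← hint_eq, step2]
    push_cast
    ring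
  constructor
  · rw [main, Complex.ofReal_re]
    exact mul_nonneg (inv_nonneg.2 ENNReal.toReal_nonneg)
      (integral_nonneg fun t => Complex.normSq_nonneg _)
  · rw [main, Complex.ofReal_im]
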